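/- arXiv:1707.02753 — 2 statements merged into one kernel-verified Lean document; each statement's English description precedes it below -/
import Mathlib

section
/- Let A be a feasible tree solution and F a feasible solution with V[A]=V[F], and let S ∈ 𝔖∖{S_u} be an equivalence class of safe edges lying on the minimal path P of A containing S, so that removing S decomposes A into components T_0,…,T_l in the order traversed by P. Then for every f ∈ F, either f crosses between T_0 and T_l, or both endpoints of f lie in a single component T_i. Consequently, for every f ∈ F, the unique cycle of A∪{f} either contains all of S or is disjoint from S (and this last consequence also holds for S = S_u). -/
open Finset

attribute [local instance] Classical.propDecidable

variable {V : Type*} [Fintype V] [DecidableEq V]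

/-- The simple graph on `V` induced by a finite set of (undirected) edges. -/
def graphOf (F : Finset (Sym2 V)) : SimpleGraph V where
  Adj u v := u ≠ v ∧ s(u, v) ∈ F
  symm := by
    constructor
    intro u v h
    refine ⟨Ne.symm h.1, ?_⟩
    rw [Sym2.eq_swap]
    exact h.2
  loopless := by constructor; intro v h; exact h.1 rfl

/-- The set of vertices incident to at least one edge of `F` (denoted `V[F]` in the paper). -/
def supp (F : Finset (Sym2 V)) : Set V := {v | ∃ e ∈ F, v ∈ e}

/-- A Steiner forest `F` is feasible for the terminal pairs `T` if it connects every pair. -/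
def Feasible (F : Finset (Sym2 V)) (T : Finset (V × V)) : Prop :=
  ∀ p ∈ T, (graphOf F).Reachable p.1 p.2

/-- Total edge cost `d(F)`. -/
def cost (d : Sym2 V → ℝ) (F : Finset (Sym2 V)) : ℝ := ∑ e ∈ F, d e

/-- `A` is a tree (on its vertex support): loopless edges, acyclic, connected on `V[A]`. -/
def IsTreeSol (A : Finset (Sym2 V)) : Prop :=
  (∀ e ∈ A, ¬ e.IsDiag) ∧ (graphOf A).IsAcyclic ∧
    ∀ u ∈ supp A, ∀ v ∈ supp A, (graphOf A).Reachable u v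

/-- Shortest-path distance between `u` and `v` in the graph with edge set `Eall`
and edge lengths `d`. -/
noncomputable def wdist (Eall : Finset (Sym2 V)) (d : Sym2 V → ℝ) (u v : V) : ℝ :=
  ⨅ p : (graphOf Eall).Walk u v, (p.edges.map d).sum

/-- Width of a vertex set `W`: the largest shortest-path distance of a terminal pair
whose two members both lie in `W`. -/
noncomputable def widthSet (Eall : Finset (Sym2 V)) (d : Sym2 V → ℝ) (T : Finset (V × V))
    (W : Set V) : ℝ :=
  sSup {x : ℝ | ∃ p ∈ T, p.1 ∈ W ∧ p.2 ∈ W ∧ x = wdist Eall d p.1 p.2}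

/-- Total width `w(F)`: the sum of the widths of the connected components of `F`. -/
noncomputable def totalWidth (Eall : Finset (Sym2 V)) (d : Sym2 V → ℝ) (T : Finset (V × V))
    (F : Finset (Sym2 V)) : ℝ :=
  ∑ᶠ c : (graphOf F).ConnectedComponent, widthSet Eall d T c.supp

/-- The potential `φ(F) = d(F) + w(F)`. -/
noncomputable def phi (Eall : Finset (Sym2 V)) (d : Sym2 V → ℝ) (T : Finset (V × V))
    (F : Finset (Sym2 V)) : ℝ :=
  cost d F + totalWidth Eall d T F

/-- Some edge of `F` leaves the vertex set `W`. -/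
def leavesSet (F : Finset (Sym2 V)) (W : Set V) : Prop :=
  ∃ g ∈ F, ∃ x y : V, g = s(x, y) ∧ x ∈ W ∧ y ∉ W

/-- `T_{e,f}`: the connected component of `A ∖ {e,f}` containing the interior of the
unique `e`–`f` path of the tree `A`; equivalently, the component containing an endpoint
of `e` together with an endpoint of `f`. -/
def midComp (A : Finset (Sym2 V)) (e f : Sym2 V) : Set V :=
  {v | ∃ x ∈ e, ∃ y ∈ f,
    (graphOf (A \ {e, f})).Reachable x y ∧ (graphOf (A \ {e, f})).Reachable x v}

/-- `e` and `f` are compatible w.r.t. `F` (`e ~cp f`). -/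
def Compatible (A F : Finset (Sym2 V)) (e f : Sym2 V) : Prop :=
  e = f ∨ ¬ leavesSet F (midComp A e f)

/-- `e` is safe: some `F`-edge crosses between the two components of `A ∖ {e}`. -/
def Safe (A F : Finset (Sym2 V)) (e : Sym2 V) : Prop :=
  ∃ g ∈ F, ∃ x y : V, g = s(x, y) ∧ x ≠ y ∧ ¬ (graphOf (A.erase e)).Reachable x y

/-- `e` is essential: removing it from `A` destroys feasibility. -/
def Essential (A : Finset (Sym2 V)) (T : Finset (V × V)) (e : Sym2 V) : Prop :=
  ¬ Feasible (A.erase e) T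

/-- The compatibility class of the edge `e` of `A`. -/
noncomputable def cls (A F : Finset (Sym2 V)) (e : Sym2 V) : Finset (Sym2 V) :=
  A.filter (fun f => Compatible A F e f)

/-- `S_u`: the set of unsafe edges of `A`. -/
noncomputable def unsafeCls (A F : Finset (Sym2 V)) : Finset (Sym2 V) :=
  A.filter (fun e => ¬ Safe A F e)

/-- `𝔖`: the set of compatibility classes of edges of `A`. -/
noncomputable def classes (A F : Finset (Sym2 V)) : Finset (Finset (Sym2 V)) :=
  A.image (cls A F)

/-- `e` lies on the fundamental cycle closed by adding the edge `f` to the tree `A`. -/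
def onFundCycle (A : Finset (Sym2 V)) (f e : Sym2 V) : Prop :=
  e ∈ A ∧ ∀ x y : V, f = s(x, y) →
    (graphOf A).Reachable x y ∧ ¬ (graphOf (A.erase e)).Reachable x y

/-- Edge/edge swap optimality of `A` w.r.t. added edges from `Eadd` and objective `obj`:
no swap that adds an edge `f ∈ Eadd` and removes one edge of the cycle it closes,
keeping feasibility, strictly decreases the objective. -/
def EdgeEdgeSwapOptimal (Eadd : Finset (Sym2 V)) (T : Finset (V × V))
    (obj : Finset (Sym2 V) → ℝ) (A : Finset (Sym2 V)) : Prop :=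
  ∀ f ∈ Eadd, ∀ e, onFundCycle A f e →
    Feasible (A.erase e ∪ {f}) T → obj A ≤ obj (A.erase e ∪ {f})

/-- Edge/set swap optimality of `A` w.r.t. added edges from `Eadd` and objective `obj`:
no swap that adds an edge `f ∈ Eadd` and removes a set `S` of edges of the cycle it closes,
keeping feasibility, strictly decreases the objective. -/
def EdgeSetSwapOptimal (Eadd : Finset (Sym2 V)) (T : Finset (V × V))
    (obj : Finset (Sym2 V) → ℝ) (A : Finset (Sym2 V)) : Prop :=
  ∀ f ∈ Eadd, ∀ S ⊆ A, (∀ e ∈ S, onFundCycle A f e) →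
    Feasible ((A \ S) ∪ {f}) T → obj A ≤ obj ((A \ S) ∪ {f})

/-- Removing swap optimality: deleting any (feasibility preserving) edge set from `A`
does not strictly decrease the objective. -/
def RemovingSwapOptimal (T : Finset (V × V))
    (obj : Finset (Sym2 V) → ℝ) (A : Finset (Sym2 V)) : Prop :=
  ∀ S ⊆ A, Feasible (A \ S) T → obj A ≤ obj (A \ S)

/-- Path/set swap optimality of `A`: for vertices `u, v` in the same component of `A`,
adding a set `P ⊆ Eadd` of edges (along a `u`–`v` connection) and removing a set `S` of
edges of the component of `u`, in a way that keeps `u,v` connected and the solution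
feasible, does not strictly decrease the objective. -/
def PathSetSwapOptimal (Eadd : Finset (Sym2 V)) (T : Finset (V × V))
    (obj : Finset (Sym2 V) → ℝ) (A : Finset (Sym2 V)) : Prop :=
  ∀ u v : V, (graphOf A).Reachable u v →
    ∀ P : Finset (Sym2 V), P ⊆ Eadd → ∀ S ⊆ A,
      (∀ e ∈ S, ∃ x ∈ e, (graphOf A).Reachable u x) →
      (graphOf ((A \ S) ∪ P)).Reachable u v →
      Feasible ((A \ S) ∪ P) T → obj A ≤ obj ((A \ S) ∪ P)

/-- A connected component `c` of `A ∖ S` is an *inner* component for the class `S`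
if it touches (at least) two distinct edges of `S`. -/
def innerComp (A S : Finset (Sym2 V)) (c : (graphOf (A \ S)).ConnectedComponent) : Prop :=
  ∃ e ∈ S, ∃ e' ∈ S, e ≠ e' ∧ (∃ x ∈ e, (graphOf (A \ S)).connectedComponentMk x = c) ∧
    ∃ y ∈ e', (graphOf (A \ S)).connectedComponentMk y = c

/-- The sum of the widths of the inner components `E_{S,i}`, `i ∈ In_S`, of the class `S`. -/
noncomputable def innerWidthSum (Eall : Finset (Sym2 V)) (d : Sym2 V → ℝ) (T : Finset (V × V))
    (A S : Finset (Sym2 V)) : ℝ :=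
  ∑ᶠ c : (graphOf (A \ S)).ConnectedComponent,
    if innerComp A S c then widthSet Eall d T c.supp else 0

/-- `index(E')` for a vertex set `W`: the largest index `i` (in the enumeration `tp` of the
terminal pairs by nondecreasing distance) of a terminal pair lying entirely inside `W`. -/
noncomputable def idxOf {nt : ℕ} (tp : Fin nt → V × V) (W : Set V) : ℕ :=
  sSup {i : ℕ | ∃ h : i < nt, (tp ⟨i, h⟩).1 ∈ W ∧ (tp ⟨i, h⟩).2 ∈ W}

/-- The finite vertex support of an edge set. -/
def suppF (B : Finset (Sym2 V)) : Finset V :=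
  Finset.univ.filter (fun v => ∃ e ∈ B, v ∈ e)

/-- `e` crosses between two different connected components of `A`. -/
def crossingEdge (A : Finset (Sym2 V)) (e : Sym2 V) : Prop :=
  ∀ x y : V, e = s(x, y) → ¬ (graphOf A).Reachable x y

/-- The components of `A` touched by the edge set `B`, i.e. the nodes of `G_A`
incident to `B`. -/
noncomputable def touched (A B : Finset (Sym2 V)) :
    Finset ((graphOf A).ConnectedComponent) :=
  (suppF B).image ((graphOf A).connectedComponentMk)

/-- `B` is (the edge set of) a tree in the contracted multigraph `G_A`: all its edges cross
between components of `A`, it is connected (through the components of `A` it touches), and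
it has one edge less than the number of components it touches. -/
def IsGATree (A B : Finset (Sym2 V)) : Prop :=
  (∀ e ∈ B, crossingEdge A e) ∧ (touched A B).card = B.card + 1 ∧
    ∀ x ∈ suppF B, ∀ y ∈ suppF B, (graphOf (A ∪ B)).Reachable x y

/-- `A` is `c`-approximate connecting move optimal: for every tree `B` in `G_A` (with edges
taken from `Emoves`), the total width of the components it connects, minus the largest of
these widths, is at most `c` times the length of the tree. -/
def ConnApproxOptimal (Emoves Eall : Finset (Sym2 V)) (d : Sym2 V → ℝ) (T : Finset (V × V))
    (c : ℝ) (A : Finset (Sym2 V)) : Prop :=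
  ∀ B ⊆ Emoves, IsGATree A B →
    (∑ t ∈ touched A B, widthSet Eall d T t.supp)
      - (⨆ t ∈ touched A B, widthSet Eall d T t.supp) ≤ c * ∑ e ∈ B, d e

set_option linter.unusedSectionVars false
set_option linter.unusedVariables false
set_option maxHeartbeats 1000000

lemma mem_of_mem_edges {A : Finset (Sym2 V)} {x y : V} {q : (graphOf A).Walk x y}
    {g : Sym2 V} (h : g ∈ q.edges) : g ∈ A := by
  have := q.edges_subset_edgeSet h
  induction g with
  | h a b => exact this.2

lemma transfer {A B : Finset (Sym2 V)} {x y : V} (q : (graphOf A).Walk x y)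
    (h : ∀ g ∈ q.edges, g ∈ B) : (graphOf B).Reachable x y := by
  induction q with
  | nil => exact SimpleGraph.Reachable.refl _
  | @cons a b c hab q ih =>
    have h1 : (graphOf B).Adj a b := ⟨hab.1, h _ (by simp)⟩
    exact (h1.reachable).trans (ih (fun g hg => h g (by simp [hg])))

lemma reach_mono {A B : Finset (Sym2 V)} (hBA : B ⊆ A) {x y : V}
    (h : (graphOf B).Reachable x y) : (graphOf A).Reachable x y := by
  obtain ⟨q⟩ := h
  exact transfer q (fun g hg => hBA (mem_of_mem_edges hg))

lemma split_at_edge {A : Finset (Sym2 V)} {x y : V} (q : (graphOf A).Walk x y)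
    (hq : q.edges.Nodup) {e : Sym2 V} (he : e ∈ q.edges) :
    ∃ a b, e = s(a, b) ∧ ∃ (q₁ : (graphOf A).Walk x a) (q₂ : (graphOf A).Walk b y),
      (∀ g ∈ q₁.edges, g ∈ q.edges ∧ g ≠ e) ∧ (∀ g ∈ q₂.edges, g ∈ q.edges ∧ g ≠ e) ∧
      (∀ g ∈ q₁.edges, g ∉ q₂.edges) ∧ q₁.edges.Nodup ∧ q₂.edges.Nodup ∧
      (∀ g ∈ q.edges, g = e ∨ g ∈ q₁.edges ∨ g ∈ q₂.edges) := by
  induction q with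
  | nil => simp at he
  | @cons a b c hab q ih =>
    rw [SimpleGraph.Walk.edges_cons] at he hq
    have hq' := List.nodup_cons.mp hq
    rcases List.mem_cons.mp he with h1 | h2
    · refine ⟨a, b, h1, SimpleGraph.Walk.nil, q, by simp, ?_, by simp, by simp, hq'.2, ?_⟩
      · intro g hg
        refine ⟨by rw [SimpleGraph.Walk.edges_cons]; exact List.mem_cons_of_mem _ hg, ?_⟩
        intro hge
        rw [hge, h1] at hg
        exact hq'.1 hg
      · intro g hg
        rw [SimpleGraph.Walk.edges_cons] at hg
        rcases List.mem_cons.mp hg with h | h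
        · exact Or.inl (by rw [h, ← h1])
        · simp only [SimpleGraph.Walk.edges_nil]
          exact Or.inr (Or.inr h)
    · obtain ⟨a', b', hee, q₁, q₂, hq1, hq2, hdisj, hn1, hn2, hcov⟩ := ih hq'.2 h2
      have hne : s(a, b) ≠ e := by
        intro h; exact hq'.1 (h ▸ h2)
      refine ⟨a', b', hee, SimpleGraph.Walk.cons hab q₁, q₂, ?_, ?_, ?_, ?_, hn2, ?_⟩
      · intro g hg
        rw [SimpleGraph.Walk.edges_cons] at hg
        rcases List.mem_cons.mp hg with h | h
        · subst h
          exact ⟨by rw [SimpleGraph.Walk.edges_cons]; exact List.mem_cons_self, hne⟩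
        · exact ⟨by rw [SimpleGraph.Walk.edges_cons]; exact List.mem_cons_of_mem _ (hq1 g h).1,
            (hq1 g h).2⟩
      · intro g hg
        exact ⟨by rw [SimpleGraph.Walk.edges_cons]; exact List.mem_cons_of_mem _ (hq2 g hg).1,
          (hq2 g hg).2⟩
      · intro g hg
        rw [SimpleGraph.Walk.edges_cons] at hg
        rcases List.mem_cons.mp hg with h | h
        · subst h
          intro hmem
          exact hq'.1 (hq2 _ hmem).1
        · exact hdisj g h
      · rw [SimpleGraph.Walk.edges_cons, List.nodup_cons]
        exact ⟨fun hmem => hq'.1 (hq1 _ hmem).1, hn1⟩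
      · intro g hg
        rw [SimpleGraph.Walk.edges_cons] at hg
        rw [SimpleGraph.Walk.edges_cons]
        rcases List.mem_cons.mp hg with h | h
        · exact Or.inr (Or.inl (by rw [h]; exact List.mem_cons_self))
        · rcases hcov g h with h' | h' | h'
          · exact Or.inl h'
          · exact Or.inr (Or.inl (List.mem_cons_of_mem _ h'))
          · exact Or.inr (Or.inr h')

set_option linter.unusedSectionVars false

lemma graphOf_erase (A : Finset (Sym2 V)) (e : Sym2 V) :
    graphOf (A.erase e) = graphOf A \ SimpleGraph.fromEdgeSet {e} := by
  ext a b
  simp only [graphOf, Finset.mem_erase, SimpleGraph.sdiff_adj, SimpleGraph.fromEdgeSet_adj,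
    Set.mem_singleton_iff]
  tauto

lemma sep' {A : Finset (Sym2 V)} (hacyc : (graphOf A).IsAcyclic) {x w : V}
    {r : (graphOf A).Walk x w} (hr : r.IsPath) {e : Sym2 V} (he : e ∈ r.edges) :
    ¬ (graphOf (A.erase e)).Reachable x w := by
  induction r with
  | nil => simp at he
  | @cons a b c hab q ih =>
    rw [SimpleGraph.Walk.edges_cons] at he
    have hnd := hr.isTrail.edges_nodup
    rw [SimpleGraph.Walk.edges_cons, List.nodup_cons] at hnd
    rcases List.mem_cons.mp he with h1 | h2
    · intro hreach
      have hbw : (graphOf (A.erase e)).Reachable b c := by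
        refine transfer q (fun g hg => Finset.mem_erase.mpr ⟨?_, mem_of_mem_edges hg⟩)
        intro hge
        rw [← h1] at hnd
        exact hnd.1 (hge ▸ hg)
      have hab' : (graphOf (A.erase e)).Reachable a b := hreach.trans hbw.symm
      have hbridge := (SimpleGraph.isAcyclic_iff_forall_edge_isBridge.mp hacyc
        ((SimpleGraph.mem_edgeSet _).mpr hab))
      rw [SimpleGraph.isBridge_iff] at hbridge
      rw [← h1, SimpleGraph.deleteEdges, ← graphOf_erase] at hbridge
      exact hbridge hab'
    · intro hreach
      have hne : s(a, b) ≠ e := fun hh => hnd.1 (hh ▸ h2)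
      have hadj : (graphOf (A.erase e)).Adj a b :=
        ⟨hab.1, Finset.mem_erase.mpr ⟨hne, hab.2⟩⟩
      exact ih hr.of_cons h2 (hadj.symm.reachable.trans hreach)

lemma pSides {A : Finset (Sym2 V)} {u v : V} {p : (graphOf A).Walk u v}
    (hp : p.IsPath) {e : Sym2 V} (he : e ∈ p.edges) :
    ∃ a b, e = s(a, b) ∧ (graphOf (A.erase e)).Reachable u a ∧
      (graphOf (A.erase e)).Reachable b v := by
  obtain ⟨a, b, heq, q₁, q₂, hq1, hq2, _, _, _, _⟩ :=
    split_at_edge p hp.isTrail.edges_nodup he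
  exact ⟨a, b, heq,
    transfer q₁ (fun g hg => Finset.mem_erase.mpr ⟨(hq1 g hg).2, mem_of_mem_edges hg⟩),
    transfer q₂ (fun g hg => Finset.mem_erase.mpr ⟨(hq2 g hg).2, mem_of_mem_edges hg⟩)⟩

lemma excl {A : Finset (Sym2 V)} (hacyc : (graphOf A).IsAcyclic) {u v : V}
    {p : (graphOf A).Walk u v} (hp : p.IsPath) {e : Sym2 V} (he : e ∈ p.edges) {w : V}
    (h1 : (graphOf (A.erase e)).Reachable u w) (h2 : (graphOf (A.erase e)).Reachable w v) :
    False :=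
  sep' hacyc hp he (h1.trans h2)

lemma dich {A : Finset (Sym2 V)} (hacyc : (graphOf A).IsAcyclic) {u v : V}
    {p : (graphOf A).Walk u v} (hp : p.IsPath) {e : Sym2 V} (he : e ∈ p.edges) {w : V}
    (hw : (graphOf A).Reachable u w) :
    (graphOf (A.erase e)).Reachable u w ∨ (graphOf (A.erase e)).Reachable w v := by
  obtain ⟨q0⟩ := hw
  set r := q0.bypass with hrdef
  have hr : r.IsPath := q0.bypass_isPath
  by_cases he' : e ∈ r.edges
  · obtain ⟨α, β, heq, q₁, q₂, hq1, hq2, _, _, _, _⟩ :=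
      split_at_edge r hr.isTrail.edges_nodup he'
    have h1 : (graphOf (A.erase e)).Reachable u α :=
      transfer q₁ (fun g hg => Finset.mem_erase.mpr ⟨(hq1 g hg).2, mem_of_mem_edges hg⟩)
    have h2 : (graphOf (A.erase e)).Reachable β w :=
      transfer q₂ (fun g hg => Finset.mem_erase.mpr ⟨(hq2 g hg).2, mem_of_mem_edges hg⟩)
    obtain ⟨a, b, heq', hua, hbv⟩ := pSides hp he
    rw [heq] at heq'
    rcases Sym2.eq_iff.mp heq' with ⟨ha, hb⟩ | ⟨ha, hb⟩
    · subst ha; subst hb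
      exact Or.inr (h2.symm.trans hbv)
    · subst ha; subst hb
      exact absurd (excl hacyc hp he h1 hbv) id
  · exact Or.inl (transfer r (fun g hg =>
      Finset.mem_erase.mpr ⟨fun hge => he' (hge ▸ hg), mem_of_mem_edges hg⟩))

lemma crossOrient {A : Finset (Sym2 V)} (hacyc : (graphOf A).IsAcyclic) {u v : V}
    {p : (graphOf A).Walk u v} (hp : p.IsPath) {e : Sym2 V} (he : e ∈ p.edges) {x w : V}
    (r : (graphOf A).Walk x w) (hr : r.edges.Nodup)
    (hx : (graphOf (A.erase e)).Reachable u x) (her : e ∈ r.edges) :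
    (graphOf (A.erase e)).Reachable w v := by
  obtain ⟨α, β, heq, q₁, q₂, hq1, hq2, _, _, _, _⟩ := split_at_edge r hr her
  have h1 : (graphOf (A.erase e)).Reachable x α :=
    transfer q₁ (fun g hg => Finset.mem_erase.mpr ⟨(hq1 g hg).2, mem_of_mem_edges hg⟩)
  have h2 : (graphOf (A.erase e)).Reachable β w :=
    transfer q₂ (fun g hg => Finset.mem_erase.mpr ⟨(hq2 g hg).2, mem_of_mem_edges hg⟩)
  obtain ⟨a, b, heq', hua, hbv⟩ := pSides hp he
  rw [heq] at heq'
  rcases Sym2.eq_iff.mp heq' with ⟨ha, hb⟩ | ⟨ha, hb⟩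
  · subst ha; subst hb
    exact h2.symm.trans hbv
  · subst ha; subst hb
    exact absurd (excl hacyc hp he (hx.trans h1) hbv) id

/-- Order of two edges along the path from `u` to `v`. -/
def OrdP (A : Finset (Sym2 V)) (u v : V) (e e' : Sym2 V) : Prop :=
  ∃ a b a' b', e = s(a, b) ∧ e' = s(a', b') ∧
    (graphOf A).Adj a b ∧ (graphOf A).Adj a' b' ∧
    (graphOf (A \ {e, e'})).Reachable u a ∧ (graphOf (A \ {e, e'})).Reachable b a' ∧
    (graphOf (A \ {e, e'})).Reachable b' v

lemma sdiff_pair_subset_left {A : Finset (Sym2 V)} {e e' : Sym2 V} :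
    A \ {e, e'} ⊆ A.erase e := by
  intro g hg
  simp only [Finset.mem_sdiff, Finset.mem_insert, Finset.mem_singleton] at hg
  exact Finset.mem_erase.mpr ⟨fun h => hg.2 (Or.inl h), hg.1⟩

lemma sdiff_pair_subset_right {A : Finset (Sym2 V)} {e e' : Sym2 V} :
    A \ {e, e'} ⊆ A.erase e' := by
  intro g hg
  simp only [Finset.mem_sdiff, Finset.mem_insert, Finset.mem_singleton] at hg
  exact Finset.mem_erase.mpr ⟨fun h => hg.2 (Or.inr h), hg.1⟩

lemma order_dichotomy {A : Finset (Sym2 V)} {u v : V} (p : (graphOf A).Walk u v)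
    (hnd : p.edges.Nodup) {e e' : Sym2 V} (he : e ∈ p.edges) (he' : e' ∈ p.edges)
    (hne : e ≠ e') : OrdP A u v e e' ∨ OrdP A u v e' e := by
  obtain ⟨a, b, heq, q₁, q₂, hq1, hq2, hdisj, hn1, hn2, hcov⟩ := split_at_edge p hnd he
  have hadj : (graphOf A).Adj a b := p.adj_of_mem_edges (heq ▸ he)
  rcases hcov e' he' with h0 | h1 | h2
  · exact absurd h0.symm hne
  · -- e' on the first segment: e' comes before e
    obtain ⟨a', b', heq', r₁, r₂, hr1, hr2, _, _, _, _⟩ := split_at_edge q₁ hn1 h1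
    have hadj' : (graphOf A).Adj a' b' := p.adj_of_mem_edges (heq' ▸ (hq1 _ h1).1)
    refine Or.inr ⟨a', b', a, b, heq', heq, hadj', hadj, ?_, ?_, ?_⟩
    · refine transfer r₁ (fun g hg => ?_)
      have h := hr1 g hg
      simp only [Finset.mem_sdiff, Finset.mem_insert, Finset.mem_singleton]
      exact ⟨mem_of_mem_edges hg, by push_neg; exact ⟨h.2, (hq1 g h.1).2⟩⟩
    · refine transfer r₂ (fun g hg => ?_)
      have h := hr2 g hg
      simp only [Finset.mem_sdiff, Finset.mem_insert, Finset.mem_singleton]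
      exact ⟨mem_of_mem_edges hg, by push_neg; exact ⟨h.2, (hq1 g h.1).2⟩⟩
    · refine transfer q₂ (fun g hg => ?_)
      simp only [Finset.mem_sdiff, Finset.mem_insert, Finset.mem_singleton]
      have hgne : g ≠ e' := fun hge => hdisj e' h1 (hge ▸ hg)
      exact ⟨mem_of_mem_edges hg, by push_neg; exact ⟨hgne, (hq2 g hg).2⟩⟩
  · -- e' on the second segment: e comes before e'
    obtain ⟨a', b', heq', r₁, r₂, hr1, hr2, _, _, _, _⟩ := split_at_edge q₂ hn2 h2
    have hadj' : (graphOf A).Adj a' b' := p.adj_of_mem_edges (heq' ▸ (hq2 _ h2).1)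
    refine Or.inl ⟨a, b, a', b', heq, heq', hadj, hadj', ?_, ?_, ?_⟩
    · refine transfer q₁ (fun g hg => ?_)
      simp only [Finset.mem_sdiff, Finset.mem_insert, Finset.mem_singleton]
      have hgne : g ≠ e' := fun hge => hdisj g hg (hge ▸ h2)
      exact ⟨mem_of_mem_edges hg, by push_neg; exact ⟨(hq1 g hg).2, hgne⟩⟩
    · refine transfer r₁ (fun g hg => ?_)
      have h := hr1 g hg
      simp only [Finset.mem_sdiff, Finset.mem_insert, Finset.mem_singleton]
      exact ⟨mem_of_mem_edges hg, by push_neg; exact ⟨(hq2 g h.1).2, h.2⟩⟩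
    · refine transfer r₂ (fun g hg => ?_)
      have h := hr2 g hg
      simp only [Finset.mem_sdiff, Finset.mem_insert, Finset.mem_singleton]
      exact ⟨mem_of_mem_edges hg, by push_neg; exact ⟨(hq2 g h.1).2, h.2⟩⟩

lemma ord_sides {A : Finset (Sym2 V)} {u v : V} {e e' : Sym2 V}
    (O : OrdP A u v e e') (hne : e ≠ e') :
    ∃ a b a' b', e = s(a, b) ∧ e' = s(a', b') ∧
      (graphOf (A.erase e)).Reachable u a ∧ (graphOf (A.erase e)).Reachable b v ∧
      (graphOf (A.erase e)).Reachable a' v ∧ (graphOf (A.erase e)).Reachable b' v ∧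
      (graphOf (A.erase e')).Reachable u a ∧ (graphOf (A.erase e')).Reachable u b ∧
      (graphOf (A.erase e')).Reachable u a' ∧ (graphOf (A.erase e')).Reachable b' v ∧
      (graphOf (A \ {e, e'})).Reachable u a ∧ (graphOf (A \ {e, e'})).Reachable b a' ∧
      (graphOf (A \ {e, e'})).Reachable b' v := by
  obtain ⟨a, b, a', b', heq, heq', hadj, hadj', h1, h2, h3⟩ := O
  have m1 := @sdiff_pair_subset_left V _ _ A e e'
  have m2 := @sdiff_pair_subset_right V _ _ A e e'
  have hadjE : (graphOf (A.erase e)).Adj a' b' :=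
    ⟨hadj'.1, Finset.mem_erase.mpr ⟨heq' ▸ (Ne.symm hne), hadj'.2⟩⟩
  have hadjE' : (graphOf (A.erase e')).Adj a b :=
    ⟨hadj.1, Finset.mem_erase.mpr ⟨heq ▸ hne, hadj.2⟩⟩
  have hbv : (graphOf (A.erase e)).Reachable b v :=
    (reach_mono m1 h2).trans (hadjE.reachable.trans (reach_mono m1 h3))
  have ha'v : (graphOf (A.erase e)).Reachable a' v :=
    hadjE.reachable.trans (reach_mono m1 h3)
  have hub : (graphOf (A.erase e')).Reachable u b :=
    (reach_mono m2 h1).trans hadjE'.reachable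
  have hua' : (graphOf (A.erase e')).Reachable u a' :=
    hub.trans (reach_mono m2 h2)
  exact ⟨a, b, a', b', heq, heq', reach_mono m1 h1, hbv, ha'v, reach_mono m1 h3,
    reach_mono m2 h1, hub, hua', reach_mono m2 h3, h1, h2, h3⟩

lemma midComp_comm (A : Finset (Sym2 V)) (e f : Sym2 V) : midComp A e f = midComp A f e := by
  have hpair : ({e, f} : Finset (Sym2 V)) = {f, e} := Finset.pair_comm e f
  ext w
  constructor
  · rintro ⟨x, hx, y, hy, h1, h2⟩
    exact ⟨y, hy, x, hx, by rw [← hpair]; exact h1.symm, by rw [← hpair]; exact h1.symm.trans h2⟩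
  · rintro ⟨x, hx, y, hy, h1, h2⟩
    exact ⟨y, hy, x, hx, by rw [hpair]; exact h1.symm, by rw [hpair]; exact h1.symm.trans h2⟩

section TreeSides

variable {A : Finset (Sym2 V)} {u v : V} {p : (graphOf A).Walk u v} {e e' : Sym2 V}

lemma LMon (hacyc : (graphOf A).IsAcyclic) (hp : p.IsPath)
    (he : e ∈ p.edges) (he' : e' ∈ p.edges) (hne : e ≠ e')
    (O : OrdP A u v e e') {w : V} (hw : (graphOf (A.erase e')).Reachable w v) :
    (graphOf (A.erase e)).Reachable w v := by
  obtain ⟨a, b, a', b', heq, heq', hua, hbv, ha'v, hb'v, hua2, hub2, hua'2, hb'v2, _, _, _⟩ :=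
    ord_sides O hne
  have hvw : (graphOf A).Reachable v w := (reach_mono (Finset.erase_subset _ _) hw).symm
  obtain ⟨q0⟩ := hvw
  have hr : q0.bypass.IsPath := q0.bypass_isPath
  by_cases hre' : e' ∈ q0.bypass.edges
  · exact absurd hw.symm (sep' hacyc hr hre')
  by_cases hre : e ∈ q0.bypass.edges
  · obtain ⟨α, β, heqr, q₁, q₂, hq1, hq2, _, _, _, _⟩ :=
      split_at_edge q0.bypass hr.isTrail.edges_nodup hre
    have h1e : (graphOf (A.erase e)).Reachable v α :=
      transfer q₁ (fun g hg => Finset.mem_erase.mpr ⟨(hq1 g hg).2, mem_of_mem_edges hg⟩)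
    have h1e' : (graphOf (A.erase e')).Reachable v α :=
      transfer q₁ (fun g hg => Finset.mem_erase.mpr
        ⟨fun hh => hre' (hh ▸ (hq1 g hg).1), mem_of_mem_edges hg⟩)
    rw [heqr] at heq
    rcases Sym2.eq_iff.mp heq.symm with ⟨ha, hb⟩ | ⟨ha, hb⟩
    · subst ha
      exact absurd (excl hacyc hp he hua h1e.symm) id
    · subst ha; subst hb
      exact absurd (excl hacyc hp he' hub2 h1e'.symm) id
  · exact (transfer q0.bypass (fun g hg => Finset.mem_erase.mpr
      ⟨fun hh => hre (by rw [← hh]; exact hg), mem_of_mem_edges hg⟩)).symm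

lemma LMon2 (hacyc : (graphOf A).IsAcyclic) (hp : p.IsPath)
    (he : e ∈ p.edges) (he' : e' ∈ p.edges) (hne : e ≠ e')
    (O : OrdP A u v e e') {w : V} (hw : (graphOf (A.erase e)).Reachable u w) :
    (graphOf (A.erase e')).Reachable u w := by
  have hwA : (graphOf A).Reachable u w := reach_mono (Finset.erase_subset _ _) hw
  rcases dich hacyc hp he' hwA with h | h
  · exact h
  · exact absurd (excl hacyc hp he hw (LMon hacyc hp he he' hne O h)) id

lemma M1 (hacyc : (graphOf A).IsAcyclic) (hp : p.IsPath)
    (he : e ∈ p.edges) (he' : e' ∈ p.edges) (hne : e ≠ e')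
    (O : OrdP A u v e e') {w : V} (hw1 : (graphOf (A.erase e)).Reachable w v)
    (hw2 : (graphOf (A.erase e')).Reachable u w) : w ∈ midComp A e e' := by
  obtain ⟨a, b, a', b', heq, heq', hua, hbv, ha'v, hb'v, hua2, hub2, hua'2, hb'v2,
    hR1, hR2, hR3⟩ := ord_sides O hne
  have hbw : (graphOf A).Reachable b w :=
    ((reach_mono (Finset.erase_subset _ _) hbv).trans p.reachable.symm).trans
      (reach_mono (Finset.erase_subset _ _) hw2)
  obtain ⟨q0⟩ := hbw
  have hr : q0.bypass.IsPath := q0.bypass_isPath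
  have hre : e ∉ q0.bypass.edges := by
    intro hre
    obtain ⟨α, β, heqr, q₁, q₂, hq1, hq2, _, _, _, _⟩ :=
      split_at_edge q0.bypass hr.isTrail.edges_nodup hre
    have h1 : (graphOf (A.erase e)).Reachable b α :=
      transfer q₁ (fun g hg => Finset.mem_erase.mpr ⟨(hq1 g hg).2, mem_of_mem_edges hg⟩)
    have h2 : (graphOf (A.erase e)).Reachable β w :=
      transfer q₂ (fun g hg => Finset.mem_erase.mpr ⟨(hq2 g hg).2, mem_of_mem_edges hg⟩)
    rw [heqr] at heq
    rcases Sym2.eq_iff.mp heq.symm with ⟨ha, hb⟩ | ⟨ha, hb⟩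
    · subst ha
      exact excl hacyc hp he (hua.trans h1.symm) hbv
    · subst ha; subst hb
      exact excl hacyc hp he (hua.trans h2) hw1
  have hre' : e' ∉ q0.bypass.edges := by
    intro hre'
    obtain ⟨α, β, heqr, q₁, q₂, hq1, hq2, _, _, _, _⟩ :=
      split_at_edge q0.bypass hr.isTrail.edges_nodup hre'
    have h1 : (graphOf (A.erase e')).Reachable b α :=
      transfer q₁ (fun g hg => Finset.mem_erase.mpr ⟨(hq1 g hg).2, mem_of_mem_edges hg⟩)
    have h2 : (graphOf (A.erase e')).Reachable β w :=
      transfer q₂ (fun g hg => Finset.mem_erase.mpr ⟨(hq2 g hg).2, mem_of_mem_edges hg⟩)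
    rw [heqr] at heq'
    rcases Sym2.eq_iff.mp heq'.symm with ⟨ha, hb⟩ | ⟨ha, hb⟩
    · subst ha; subst hb
      exact excl hacyc hp he' hw2 (h2.symm.trans hb'v2)
    · subst ha; subst hb
      exact excl hacyc hp he' (hub2.trans h1) hb'v2
  have hRbw : (graphOf (A \ {e, e'})).Reachable b w := by
    refine transfer q0.bypass (fun g hg => ?_)
    simp only [Finset.mem_sdiff, Finset.mem_insert, Finset.mem_singleton]
    exact ⟨mem_of_mem_edges hg, by
      push_neg
      exact ⟨fun hh => hre (hh ▸ hg), fun hh => hre' (hh ▸ hg)⟩⟩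
  exact ⟨b, by rw [heq]; exact Sym2.mem_mk_right a b, a',
    by rw [heq']; exact Sym2.mem_mk_left a' b', hR2, hRbw⟩

lemma M2 (hacyc : (graphOf A).IsAcyclic) (hp : p.IsPath)
    (he : e ∈ p.edges) (he' : e' ∈ p.edges) (hne : e ≠ e')
    (O : OrdP A u v e e') {w : V} (hw : (graphOf (A.erase e')).Reachable w v) :
    w ∉ midComp A e e' := by
  obtain ⟨a, b, a', b', heq, heq', hua, hbv, ha'v, hb'v, hua2, hub2, hua'2, hb'v2, _, _, _⟩ :=
    ord_sides O hne
  rintro ⟨x₁, hx₁, y₁, hy₁, hQ1, hQ2⟩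
  have hx₁w : (graphOf (A.erase e')).Reachable x₁ w := reach_mono sdiff_pair_subset_right hQ2
  rw [heq, Sym2.mem_iff] at hx₁
  rcases hx₁ with rfl | rfl
  · exact excl hacyc hp he' (hua2.trans hx₁w) hw
  · exact excl hacyc hp he' (hub2.trans hx₁w) hw

lemma M3 (hacyc : (graphOf A).IsAcyclic) (hp : p.IsPath)
    (he : e ∈ p.edges) (he' : e' ∈ p.edges) (hne : e ≠ e')
    (O : OrdP A u v e e') {w : V} (hw : (graphOf (A.erase e)).Reachable u w) :
    w ∉ midComp A e e' := by
  obtain ⟨a, b, a', b', heq, heq', hua, hbv, ha'v, hb'v, hua2, hub2, hua'2, hb'v2, _, _, _⟩ :=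
    ord_sides O hne
  rintro ⟨x₁, hx₁, y₁, hy₁, hQ1, hQ2⟩
  have hx₁y₁ : (graphOf (A.erase e)).Reachable x₁ y₁ := reach_mono sdiff_pair_subset_left hQ1
  have hx₁w : (graphOf (A.erase e)).Reachable x₁ w := reach_mono sdiff_pair_subset_left hQ2
  rw [heq', Sym2.mem_iff] at hy₁
  have hy₁v : (graphOf (A.erase e)).Reachable y₁ v := by
    rcases hy₁ with rfl | rfl
    · exact ha'v
    · exact hb'v
  exact excl hacyc hp he hw (hx₁w.symm.trans (hx₁y₁.trans hy₁v))

end TreeSides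

lemma side_lemma (A F : Finset (Sym2 V)) (hacyc : (graphOf A).IsAcyclic)
    {u v : V} {p : (graphOf A).Walk u v} (hp : p.IsPath)
    (e₀ : Sym2 V) (he₀ : e₀ ∈ A) (S : Finset (Sym2 V)) (hS : S = cls A F e₀)
    (hSp : ∀ e ∈ S, e ∈ p.edges)
    {x y : V} (hf : s(x, y) ∈ F)
    {es : Sym2 V} (hes : es ∈ S)
    (hx : (graphOf (A.erase es)).Reachable u x)
    (hy : (graphOf (A.erase es)).Reachable y v) :
    ∀ e ∈ S, (graphOf (A.erase e)).Reachable u x := by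
  have hnd : p.edges.Nodup := hp.isTrail.edges_nodup
  have he₀S : e₀ ∈ S := by
    rw [hS, cls, Finset.mem_filter]
    exact ⟨he₀, Or.inl rfl⟩
  have compat : ∀ e ∈ S, Compatible A F e₀ e := by
    intro e he
    rw [hS, cls, Finset.mem_filter] at he
    exact he.2
  have hxA : (graphOf A).Reachable u x := reach_mono (Finset.erase_subset _ _) hx
  have hyA : (graphOf A).Reachable u y :=
    p.reachable.trans (reach_mono (Finset.erase_subset _ _) hy).symm
  intro e he
  rcases dich hacyc hp (hSp e he) hxA with h | hxe
  · exact h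
  -- x is on the far side of e; derive a contradiction
  exfalso
  have hep := hSp e he
  have hesp := hSp es hes
  have hne : e ≠ es := fun h => excl hacyc hp hesp hx (h ▸ hxe)
  rcases order_dichotomy p hnd hep hesp hne with O | O'
  swap
  · -- es comes before e : impossible since x is before es but after e
    exact excl hacyc hp hep (LMon2 hacyc hp hesp hep hne.symm O' hx) hxe
  -- O : OrdP A u v e es
  have hye : (graphOf (A.erase e)).Reachable y v := LMon hacyc hp hep hesp hne O hy
  by_cases h₀e : e₀ = e
  · -- pair (e₀ = e, es)
    have hxmid : x ∈ midComp A e es := M1 hacyc hp hep hesp hne O hxe hx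
    have hymid : y ∉ midComp A e es := M2 hacyc hp hep hesp hne O hy
    rcases compat es hes with h | h
    · exact hne (h₀e ▸ h)
    · exact h (h₀e ▸ ⟨s(x, y), hf, x, y, rfl, hxmid, hymid⟩)
  by_cases h₀s : e₀ = es
  · -- pair (e, e₀ = es)
    have hxmid : x ∈ midComp A e es := M1 hacyc hp hep hesp hne O hxe hx
    have hymid : y ∉ midComp A e es := M2 hacyc hp hep hesp hne O hy
    rcases compat e he with h | h
    · exact h₀e h
    · refine h ?_
      have : leavesSet F (midComp A e es) := ⟨s(x, y), hf, x, y, rfl, hxmid, hymid⟩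
      rw [h₀s, ← midComp_comm]
      exact this
  have he₀p := hSp e₀ he₀S
  rcases order_dichotomy p hnd he₀p hep h₀e with O1 | O1'
  · -- e₀ before e
    have hxe₀ : (graphOf (A.erase e₀)).Reachable x v :=
      LMon hacyc hp he₀p hep h₀e O1 hxe
    rcases order_dichotomy p hnd he₀p hesp h₀s with O2 | O2'
    · -- e₀ before es : pair (e₀, es)
      have hxmid : x ∈ midComp A e₀ es := M1 hacyc hp he₀p hesp h₀s O2 hxe₀ hx
      have hymid : y ∉ midComp A e₀ es := M2 hacyc hp he₀p hesp h₀s O2 hy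
      rcases compat es hes with h | h
      · exact h₀s h
      · exact h ⟨s(x, y), hf, x, y, rfl, hxmid, hymid⟩
    · -- es before e₀ : x before es hence before e₀, contradiction with after e₀
      exact excl hacyc hp he₀p (LMon2 hacyc hp hesp he₀p (Ne.symm h₀s) O2' hx) hxe₀
  · -- e before e₀
    rcases order_dichotomy p hnd he₀p hesp h₀s with O2 | O2'
    · -- e₀ before es
      rcases dich hacyc hp he₀p hxA with hx₀ | hx₀
      · -- x before e₀ : pair (e, e₀)
        have hxmid : x ∈ midComp A e e₀ := M1 hacyc hp hep he₀p (Ne.symm h₀e) O1' hxe hx₀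
        have hye₀ : (graphOf (A.erase e₀)).Reachable y v :=
          LMon hacyc hp he₀p hesp h₀s O2 hy
        have hymid : y ∉ midComp A e e₀ := M2 hacyc hp hep he₀p (Ne.symm h₀e) O1' hye₀
        rcases compat e he with h | h
        · exact h₀e h
        · refine h ?_
          have : leavesSet F (midComp A e e₀) := ⟨s(x, y), hf, x, y, rfl, hxmid, hymid⟩
          rw [← midComp_comm]
          exact this
      · -- x after e₀ : pair (e₀, es)
        have hxmid : x ∈ midComp A e₀ es := M1 hacyc hp he₀p hesp h₀s O2 hx₀ hx
        have hymid : y ∉ midComp A e₀ es := M2 hacyc hp he₀p hesp h₀s O2 hy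
        rcases compat es hes with h | h
        · exact h₀s h
        · exact h ⟨s(x, y), hf, x, y, rfl, hxmid, hymid⟩
    · -- es before e₀
      rcases dich hacyc hp he₀p hyA with hy₀ | hy₀
      · -- y before e₀ : pair (es, e₀), y inside, x outside
        have hymid : y ∈ midComp A es e₀ := M1 hacyc hp hesp he₀p (fun h => h₀s h.symm) O2' hy hy₀
        have hxmid : x ∉ midComp A es e₀ := M3 hacyc hp hesp he₀p (fun h => h₀s h.symm) O2' hx
        rcases compat es hes with h | h
        · exact h₀s h
        · refine h ?_
          refine ⟨s(x, y), hf, y, x, Sym2.eq_swap, ?_, ?_⟩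
          · rw [midComp_comm]; exact hymid
          · rw [midComp_comm]; exact hxmid
      · -- y after e₀ : pair (e, e₀), x inside, y outside
        have hx₀ : (graphOf (A.erase e₀)).Reachable u x :=
          LMon2 hacyc hp hesp he₀p (fun h => h₀s h.symm) O2' hx
        have hxmid : x ∈ midComp A e e₀ := M1 hacyc hp hep he₀p (Ne.symm h₀e) O1' hxe hx₀
        have hymid : y ∉ midComp A e e₀ := M2 hacyc hp hep he₀p (Ne.symm h₀e) O1' hy₀
        rcases compat e he with h | h
        · exact h₀e h
        · refine h ?_
          have : leavesSet F (midComp A e e₀) := ⟨s(x, y), hf, x, y, rfl, hxmid, hymid⟩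
          rw [← midComp_comm]
          exact this

lemma start_mem_supp {A : Finset (Sym2 V)} {u v : V} (p : (graphOf A).Walk u v)
    (h : p.edges ≠ []) : u ∈ supp A := by
  cases p with
  | nil => simp at h
  | cons hab q => exact ⟨_, hab.2, Sym2.mem_mk_left _ _⟩

lemma toGS {A S : Finset (Sym2 V)} (hacyc : (graphOf A).IsAcyclic) {u v : V}
    {p : (graphOf A).Walk u v} (hp : p.IsPath) (hSp : ∀ e ∈ S, e ∈ p.edges)
    {x : V} (hxA : (graphOf A).Reachable u x)
    (hall : ∀ e ∈ S, (graphOf (A.erase e)).Reachable u x) :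
    (graphOf (A \ S)).Reachable u x := by
  obtain ⟨q0⟩ := hxA
  have hr : q0.bypass.IsPath := q0.bypass_isPath
  have hnoS : ∀ g ∈ q0.bypass.edges, g ∉ S := by
    intro g hg hgS
    exact excl hacyc hp (hSp g hgS) (hall g hgS)
      (crossOrient hacyc hp (hSp g hgS) q0.bypass hr.isTrail.edges_nodup
        (SimpleGraph.Reachable.refl u) hg)
  exact transfer q0.bypass (fun g hg =>
    Finset.mem_sdiff.mpr ⟨mem_of_mem_edges hg, hnoS g hg⟩)

lemma sdiff_subset_erase_of_mem {A S : Finset (Sym2 V)} {e : Sym2 V} (he : e ∈ S) :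
    A \ S ⊆ A.erase e := by
  intro g hg
  rw [Finset.mem_sdiff] at hg
  exact Finset.mem_erase.mpr ⟨fun h => hg.2 (h ▸ he), hg.1⟩

theorem stmt8_no_F_edges_between_inner
    (T : Finset (V × V)) (A F : Finset (Sym2 V))
    (hAfeas : Feasible A T) (hFfeas : Feasible F T)
    (hAtree : IsTreeSol A) (hsupp : supp A = supp F)
    (e₀ : Sym2 V) (he₀ : e₀ ∈ A)
    (S : Finset (Sym2 V)) (hS : S = cls A F e₀) (hSu : S ≠ unsafeCls A F)
    (u v : V) (p : (graphOf A).Walk u v) (hp : p.IsPath)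
    (hSp : ∀ e ∈ S, e ∈ p.edges) :
    (∀ f ∈ F,
      (∃ x y : V, f = s(x, y) ∧
        ((graphOf (A \ S)).Reachable u x ∧ (graphOf (A \ S)).Reachable v y ∨
         (graphOf (A \ S)).Reachable u y ∧ (graphOf (A \ S)).Reachable v x)) ∨
      (∀ x y : V, f = s(x, y) → (graphOf (A \ S)).Reachable x y)) ∧
    (∀ f ∈ F, (∀ e ∈ S, onFundCycle A f e) ∨ ∀ e ∈ S, ¬ onFundCycle A f e) ∧
    (∀ f ∈ F, (∀ e ∈ unsafeCls A F, onFundCycle A f e) ∨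
      ∀ e ∈ unsafeCls A F, ¬ onFundCycle A f e) := by
  obtain ⟨hdiag, hacyc, hconn⟩ := hAtree
  have hSsubA : S ⊆ A := by rw [hS]; exact Finset.filter_subset _ _
  have he₀S : e₀ ∈ S := by
    rw [hS, cls, Finset.mem_filter]
    exact ⟨he₀, Or.inl rfl⟩
  have he₀p : e₀ ∈ p.edges := hSp e₀ he₀S
  have hpe_ne : p.edges ≠ [] := fun h => by rw [h] at he₀p; exact List.not_mem_nil he₀p
  have hu_supp : u ∈ supp A := start_mem_supp p hpe_ne
  have hv_supp : v ∈ supp A := by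
    refine start_mem_supp p.reverse ?_
    rw [SimpleGraph.Walk.edges_reverse]
    simpa using hpe_ne
  have hp' : p.reverse.IsPath := hp.reverse
  have hSp' : ∀ e ∈ S, e ∈ p.reverse.edges := by
    intro e he
    rw [SimpleGraph.Walk.edges_reverse, List.mem_reverse]
    exact hSp e he
  have K : ∀ f ∈ F,
      (∃ x y : V, f = s(x, y) ∧
        ((graphOf (A \ S)).Reachable u x ∧ (graphOf (A \ S)).Reachable v y ∨
         (graphOf (A \ S)).Reachable u y ∧ (graphOf (A \ S)).Reachable v x)) ∨
      (∀ x y : V, f = s(x, y) → (graphOf (A \ S)).Reachable x y) := by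
    intro f hf
    revert hf
    induction f using Sym2.ind with
    | _ x y =>
      intro hf
      by_cases hsame : (graphOf (A \ S)).Reachable x y
      · refine Or.inr (fun x' y' heq => ?_)
        rcases Sym2.eq_iff.mp heq with ⟨hx', hy'⟩ | ⟨hx', hy'⟩
        · rw [← hx', ← hy']; exact hsame
        · rw [← hx', ← hy']; exact hsame.symm
      · have hxs : x ∈ supp A := by
          rw [hsupp]; exact ⟨s(x, y), hf, Sym2.mem_mk_left x y⟩
        have hys : y ∈ supp A := by
          rw [hsupp]; exact ⟨s(x, y), hf, Sym2.mem_mk_right x y⟩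
        have hxyA : (graphOf A).Reachable x y := hconn x hxs y hys
        obtain ⟨q0⟩ := hxyA
        have hr : q0.bypass.IsPath := q0.bypass_isPath
        have hex : ∃ es ∈ S, es ∈ q0.bypass.edges := by
          by_contra hno
          push_neg at hno
          exact hsame (transfer q0.bypass (fun g hg =>
            Finset.mem_sdiff.mpr ⟨mem_of_mem_edges hg, fun hgS => hno g hgS hg⟩))
        obtain ⟨es, hesS, hesr⟩ := hex
        have hesp := hSp es hesS
        obtain ⟨α, β, heqr, q₁, q₂, hq1, hq2, _, _, _, _⟩ :=
          split_at_edge q0.bypass hr.isTrail.edges_nodup hesr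
        have h1 : (graphOf (A.erase es)).Reachable x α :=
          transfer q₁ (fun g hg => Finset.mem_erase.mpr ⟨(hq1 g hg).2, mem_of_mem_edges hg⟩)
        have h2 : (graphOf (A.erase es)).Reachable β y :=
          transfer q₂ (fun g hg => Finset.mem_erase.mpr ⟨(hq2 g hg).2, mem_of_mem_edges hg⟩)
        obtain ⟨a, b, heq', hua, hbv⟩ := pSides hp hesp
        rw [heqr] at heq'
        rcases Sym2.eq_iff.mp heq'.symm with ⟨ha, hb⟩ | ⟨ha, hb⟩
        · -- x on the u side, y on the v side
          subst ha; subst hb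
          have hx_u : (graphOf (A.erase es)).Reachable u x := hua.trans h1.symm
          have hy_v : (graphOf (A.erase es)).Reachable y v := h2.symm.trans hbv
          have hall_x := side_lemma A F hacyc hp e₀ he₀ S hS hSp hf hesS hx_u hy_v
          have hall_y := side_lemma A F hacyc hp' e₀ he₀ S hS hSp'
            (Sym2.eq_swap ▸ hf : s(y, x) ∈ F) hesS hy_v.symm hx_u.symm
          refine Or.inl ⟨x, y, rfl, Or.inl ⟨?_, ?_⟩⟩
          · exact toGS hacyc hp hSp
              (reach_mono (Finset.erase_subset _ _) (hall_x es hesS)) hall_x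
          · exact toGS hacyc hp' hSp'
              (reach_mono (Finset.erase_subset _ _) (hall_y es hesS)) hall_y
        · -- y on the u side, x on the v side
          subst ha; subst hb
          have hy_u : (graphOf (A.erase es)).Reachable u y := hua.trans h2
          have hx_v : (graphOf (A.erase es)).Reachable x v := h1.trans hbv
          have hall_y := side_lemma A F hacyc hp e₀ he₀ S hS hSp
            (Sym2.eq_swap ▸ hf : s(y, x) ∈ F) hesS hy_u hx_v
          have hall_x := side_lemma A F hacyc hp' e₀ he₀ S hS hSp' hf hesS
            hx_v.symm hy_u.symm
          refine Or.inl ⟨x, y, rfl, Or.inr ⟨?_, ?_⟩⟩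
          · exact toGS hacyc hp hSp
              (reach_mono (Finset.erase_subset _ _) (hall_y es hesS)) hall_y
          · exact toGS hacyc hp' hSp'
              (reach_mono (Finset.erase_subset _ _) (hall_x es hesS)) hall_x
  refine ⟨K, ?_, ?_⟩
  · intro f hf
    rcases K f hf with ⟨x, y, rfl, hc⟩ | hsame
    · left
      intro e heS
      have hsub : A \ S ⊆ A.erase e := sdiff_subset_erase_of_mem heS
      have hAsub : A \ S ⊆ A := Finset.sdiff_subset
      have hRA : (graphOf A).Reachable x y := by
        rcases hc with ⟨hx1, hy1⟩ | ⟨hx1, hy1⟩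
        · exact ((reach_mono hAsub hx1).symm.trans p.reachable).trans (reach_mono hAsub hy1)
        · exact ((reach_mono hAsub hy1).symm.trans p.reachable.symm).trans
            (reach_mono hAsub hx1)
      have hNR : ¬ (graphOf (A.erase e)).Reachable x y := by
        intro hr
        rcases hc with ⟨hx1, hy1⟩ | ⟨hx1, hy1⟩
        · exact excl hacyc hp (hSp e heS)
            ((reach_mono hsub hx1).trans hr) (reach_mono hsub hy1).symm
        · exact excl hacyc hp (hSp e heS)
            ((reach_mono hsub hx1).trans hr.symm) (reach_mono hsub hy1).symm
      refine ⟨hSsubA heS, fun x' y' heq => ?_⟩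
      rcases Sym2.eq_iff.mp heq.symm with ⟨hx', hy'⟩ | ⟨hx', hy'⟩
      · rw [hx', hy']; exact ⟨hRA, hNR⟩
      · rw [hx', hy']
        exact ⟨hRA.symm, fun hr => hNR hr.symm⟩
    · right
      intro e heS hcyc
      obtain ⟨x, y, rfl⟩ : ∃ x y, f = s(x, y) := by
        induction f using Sym2.ind with
        | _ x y => exact ⟨x, y, rfl⟩
      exact (hcyc.2 x y rfl).2
        (reach_mono (sdiff_subset_erase_of_mem heS) (hsame x y rfl))
  · intro f hf
    right
    intro e heU hcyc
    rw [unsafeCls, Finset.mem_filter] at heU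
    obtain ⟨x, y, rfl⟩ : ∃ x y, f = s(x, y) := by
      induction f using Sym2.ind with
      | _ x y => exact ⟨x, y, rfl⟩
    have h2 := (hcyc.2 x y rfl).2
    have hxy : x ≠ y := by
      intro h
      exact h2 (h ▸ SimpleGraph.Reachable.refl x)
    exact heU.2 ⟨s(x, y), hf, x, y, rfl, hxy, h2⟩
end

section
/- Let I=(V,E,𝔗,d) be a Steiner Forest instance, let F be a feasible solution with connected components F_1,…,F_{cc(F)}, and let A be a feasible tree solution. Let S_u be the set of unsafe edges of A, and assume A is removing-swap-optimal (no deletion of a feasible-to-remove edge set decreases φ). Then w(A) + Σ_{e∈S_u} d_e ≤ Σ_{i=1}^{cc(F)} w(F_i). -/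
open Finset

attribute [local instance] Classical.propDecidable

variable {V : Type*} [Fintype V] [DecidableEq V]

section Helpers

lemma graphOf_mono {B C : Finset (Sym2 V)} (h : B ⊆ C) : graphOf B ≤ graphOf C :=
  fun _ _ hadj => ⟨hadj.1, h hadj.2⟩

lemma walk_edge_mem {B : Finset (Sym2 V)} {x y : V} (w : (graphOf B).Walk x y) :
    ∀ e ∈ w.edges, e ∈ B := by
  induction w with
  | nil => simp
  | cons h w ih =>
    intro e he
    rw [SimpleGraph.Walk.edges_cons] at he
    rcases List.mem_cons.mp he with rfl | he
    · exact h.2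
    · exact ih e he

lemma reachable_of_edges {B C : Finset (Sym2 V)} {x y : V} (w : (graphOf B).Walk x y)
    (h : ∀ e ∈ w.edges, e ∈ C) : (graphOf C).Reachable x y := by
  induction w with
  | nil => exact SimpleGraph.Reachable.refl _
  | @cons a b c hab w ih =>
    refine SimpleGraph.Reachable.trans
      (SimpleGraph.Adj.reachable ⟨hab.1, h _ ?_⟩) (ih fun e he => h e ?_)
    · rw [SimpleGraph.Walk.edges_cons]; exact List.mem_cons_self
    · rw [SimpleGraph.Walk.edges_cons]; exact List.mem_cons_of_mem _ he

lemma edges_mapLe {G H : SimpleGraph V} (hle : G ≤ H) {u v : V} (p : G.Walk u v) :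
    (p.mapLe hle).edges = p.edges := by
  simp only [SimpleGraph.Walk.edges_map]
  have h1 : Sym2.map (⇑(SimpleGraph.Hom.ofLE hle)) = id := Sym2.map_id
  rw [h1, List.map_id]

lemma wdist_nonneg (Eall : Finset (Sym2 V)) (d : Sym2 V → ℝ) (hd : ∀ e, 0 ≤ d e) (u v : V) :
    0 ≤ wdist Eall d u v := by
  apply Real.iInf_nonneg
  intro p
  apply List.sum_nonneg
  intro x hx
  obtain ⟨e, _, rfl⟩ := List.mem_map.mp hx
  exact hd e

lemma widthSet_bddAbove (Eall : Finset (Sym2 V)) (d : Sym2 V → ℝ) (T : Finset (V × V))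
    (W : Set V) :
    BddAbove {x : ℝ | ∃ p ∈ T, p.1 ∈ W ∧ p.2 ∈ W ∧ x = wdist Eall d p.1 p.2} := by
  apply Set.Finite.bddAbove
  apply Set.Finite.subset (Set.Finite.image (fun p : V × V => wdist Eall d p.1 p.2) T.finite_toSet)
  rintro x ⟨p, hp, _, _, rfl⟩
  exact ⟨p, hp, rfl⟩

lemma widthSet_nonneg (Eall : Finset (Sym2 V)) (d : Sym2 V → ℝ) (hd : ∀ e, 0 ≤ d e)
    (T : Finset (V × V)) (W : Set V) : 0 ≤ widthSet Eall d T W := by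
  apply Real.sSup_nonneg
  rintro x ⟨p, _, _, _, rfl⟩
  exact wdist_nonneg Eall d hd _ _

end Helpers

theorem stmt11_removing_swap_bound
    (Eall : Finset (Sym2 V)) (d : Sym2 V → ℝ) (hd : ∀ e, 0 ≤ d e)
    (T : Finset (V × V)) (A F : Finset (Sym2 V))
    (hAE : A ⊆ Eall) (hFE : F ⊆ Eall)
    (hAfeas : Feasible A T) (hFfeas : Feasible F T)
    (hAtree : IsTreeSol A) (hsupp : supp A = supp F)
    (hrem : RemovingSwapOptimal T (phi Eall d T) A) :
    totalWidth Eall d T A + ∑ e ∈ unsafeCls A F, d e ≤ totalWidth Eall d T F := by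
  classical
  set Su := unsafeCls A F with hSu
  have hSuA : Su ⊆ A := Finset.filter_subset _ _
  -- Key: endpoints of F-edges are connected in A \ Su
  have keyA : ∀ g ∈ F, ∀ x y : V, g = s(x, y) → (graphOf (A \ Su)).Reachable x y := by
    intro g hg x y hgxy
    by_cases hxy : x = y
    · subst hxy; exact SimpleGraph.Reachable.refl _
    have hx : x ∈ supp A := by
      rw [hsupp]; exact ⟨g, hg, by rw [hgxy]; exact Sym2.mem_mk_left x y⟩
    have hy : y ∈ supp A := by
      rw [hsupp]; exact ⟨g, hg, by rw [hgxy]; exact Sym2.mem_mk_right x y⟩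
    obtain ⟨w⟩ := hAtree.2.2 x hx y hy
    set p : (graphOf A).Path x y := w.toPath with hp
    have hedge : ∀ e ∈ (p : (graphOf A).Walk x y).edges, e ∈ A \ Su := by
      intro e he
      rw [Finset.mem_sdiff]
      refine ⟨walk_edge_mem _ e he, ?_⟩
      intro heSu
      have hunsafe : ¬ Safe A F e := (Finset.mem_filter.mp heSu).2
      have hre : (graphOf (A.erase e)).Reachable x y := by
        by_contra hn
        exact hunsafe ⟨g, hg, x, y, hgxy, hxy, hn⟩
      obtain ⟨q⟩ := hre
      set q' : (graphOf (A.erase e)).Path x y := q.toPath with hq'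
      have hle : graphOf (A.erase e) ≤ graphOf A := graphOf_mono (Finset.erase_subset _ _)
      have hq''path : ((q' : (graphOf (A.erase e)).Walk x y).mapLe hle).IsPath :=
        q'.2.mapLe hle
      have hpq : p = ⟨(q' : (graphOf (A.erase e)).Walk x y).mapLe hle, hq''path⟩ :=
        hAtree.2.1.path_unique p _
      rw [hpq] at he
      simp only [edges_mapLe] at he
      have : e ∈ A.erase e := walk_edge_mem _ e he
      exact (Finset.notMem_erase e A) this
    exact reachable_of_edges (p : (graphOf A).Walk x y) hedge
  have keyB : ∀ x y : V, (graphOf F).Reachable x y → (graphOf (A \ Su)).Reachable x y := by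
    intro x y hr
    obtain ⟨w⟩ := hr
    induction w with
    | nil => exact SimpleGraph.Reachable.refl _
    | cons h w ih => exact SimpleGraph.Reachable.trans (keyA _ h.2 _ _ rfl) ih
  have hfeas : Feasible (A \ Su) T := fun pq hpq => keyB _ _ (hFfeas pq hpq)
  have hopt := hrem Su hSuA hfeas
  unfold phi at hopt
  have hcost : cost d (A \ Su) + cost d Su = cost d A := Finset.sum_sdiff hSuA
  letI : Fintype ((graphOf (A \ Su)).ConnectedComponent) := Fintype.ofFinite _
  letI : Fintype ((graphOf F).ConnectedComponent) := Fintype.ofFinite _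
  set σ : (graphOf F).ConnectedComponent → (graphOf (A \ Su)).ConnectedComponent :=
    SimpleGraph.ConnectedComponent.lift (fun v => (graphOf (A \ Su)).connectedComponentMk v)
      (fun v w pw _ => SimpleGraph.ConnectedComponent.eq.mpr (keyB v w pw.reachable)) with hσdef
  have hW : totalWidth Eall d T (A \ Su) ≤ totalWidth Eall d T F := by
    unfold totalWidth
    rw [finsum_eq_sum_of_fintype, finsum_eq_sum_of_fintype,
      ← Finset.sum_fiberwise Finset.univ σ
        (fun c => widthSet Eall d T c.supp)]
    apply Finset.sum_le_sum
    intro c _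
    unfold widthSet
    apply Real.sSup_le
    · rintro x ⟨pq, hpq, h1, h2, rfl⟩
      have hrF := hFfeas pq hpq
      set c' := (graphOf F).connectedComponentMk pq.1 with hc'
      have hc'2 : pq.2 ∈ c'.supp := by
        rw [SimpleGraph.ConnectedComponent.mem_supp_iff, hc']
        exact (SimpleGraph.ConnectedComponent.eq.mpr hrF.symm)
      have hc'1 : pq.1 ∈ c'.supp := by
        rw [SimpleGraph.ConnectedComponent.mem_supp_iff, hc']
      have hσ : σ c' = c := by
        rw [hc', hσdef]
        exact h1
      calc wdist Eall d pq.1 pq.2 ≤ widthSet Eall d T c'.supp :=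
              le_csSup (widthSet_bddAbove Eall d T c'.supp) ⟨pq, hpq, hc'1, hc'2, rfl⟩
        _ ≤ ∑ c'' ∈ Finset.univ.filter (fun c'' => σ c'' = c), widthSet Eall d T c''.supp := by
              apply Finset.single_le_sum
                (f := fun c'' : (graphOf F).ConnectedComponent => widthSet Eall d T c''.supp)
                (fun i _ => widthSet_nonneg Eall d hd T i.supp)
              exact Finset.mem_filter.mpr ⟨Finset.mem_univ _, hσ⟩
    · exact Finset.sum_nonneg fun i _ => widthSet_nonneg Eall d hd T i.supp
  have hc2 : (∑ e ∈ Su, d e) = cost d Su := rfl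
  linarith
end
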